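/- Let s, q ∈ ℍ with s ∉ [q] (equivalently, the quaternion Q_{c,s}(q) = s² − 2Re(q)s + |q|² is nonzero). Then the partial derivative along the real direction of the left slice hyperholomorphic Cauchy kernel satisfies: ∂_{q₀} S_L^{-1}(s,q) = −Q_{c,s}(q)^{-1} + (q₀/2) F_L(s,q) − (1/2) F_L(s,q) s. -/

import Mathlib

noncomputable section

open scoped Quaternion
open Finset

/-- The imaginary units `e₁, e₂, e₃` of the quaternions `ℍ = ℍ[ℝ]`. -/
def e1 : ℍ[ℝ] := ⟨0, 1, 0, 0⟩
def e2 : ℍ[ℝ] := ⟨0, 0, 1, 0⟩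
def e3 : ℍ[ℝ] := ⟨0, 0, 0, 1⟩

/-- The (left) Fueter operator `Df = ∂_{q₀}f + e₁∂_{q₁}f + e₂∂_{q₂}f + e₃∂_{q₃}f`,
where the partial derivatives are the directional derivatives along `1, e₁, e₂, e₃`. -/
def Dop (f : ℍ[ℝ] → ℍ[ℝ]) (q : ℍ[ℝ]) : ℍ[ℝ] :=
  fderiv ℝ f q 1 + e1 * fderiv ℝ f q e1 + e2 * fderiv ℝ f q e2 + e3 * fderiv ℝ f q e3

/-- The (left) conjugate Fueter operator
`D̄f = ∂_{q₀}f − e₁∂_{q₁}f − e₂∂_{q₂}f − e₃∂_{q₃}f`. -/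
def Dbar (f : ℍ[ℝ] → ℍ[ℝ]) (q : ℍ[ℝ]) : ℍ[ℝ] :=
  fderiv ℝ f q 1 - e1 * fderiv ℝ f q e1 - e2 * fderiv ℝ f q e2 - e3 * fderiv ℝ f q e3

/-- The right Fueter operator `fD = ∂_{q₀}f + (∂_{q₁}f)e₁ + (∂_{q₂}f)e₂ + (∂_{q₃}f)e₃`. -/
def DopR (f : ℍ[ℝ] → ℍ[ℝ]) (q : ℍ[ℝ]) : ℍ[ℝ] :=
  fderiv ℝ f q 1 + fderiv ℝ f q e1 * e1 + fderiv ℝ f q e2 * e2 + fderiv ℝ f q e3 * e3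

/-- The right conjugate Fueter operator
`fD̄ = ∂_{q₀}f − (∂_{q₁}f)e₁ − (∂_{q₂}f)e₂ − (∂_{q₃}f)e₃`. -/
def DbarR (f : ℍ[ℝ] → ℍ[ℝ]) (q : ℍ[ℝ]) : ℍ[ℝ] :=
  fderiv ℝ f q 1 - fderiv ℝ f q e1 * e1 - fderiv ℝ f q e2 * e2 - fderiv ℝ f q e3 * e3

/-- The Laplacian in the four real variables `q₀, q₁, q₂, q₃`. -/
def Lap (f : ℍ[ℝ] → ℍ[ℝ]) (q : ℍ[ℝ]) : ℍ[ℝ] :=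
  fderiv ℝ (fun p => fderiv ℝ f p 1) q 1 + fderiv ℝ (fun p => fderiv ℝ f p e1) q e1 +
    fderiv ℝ (fun p => fderiv ℝ f p e2) q e2 + fderiv ℝ (fun p => fderiv ℝ f p e3) q e3

/-- `s ∈ [q]`: membership in the 2-sphere
`[q] = {p : Re(p) = Re(q), |Im(p)| = |Im(q)|}` of `q`. -/
def inSphereOf (s q : ℍ[ℝ]) : Prop := s.re = q.re ∧ ‖s.im‖ = ‖q.im‖

/-- `Q_{c,s}(q) = s² − 2 Re(q) s + |q|²`. -/
def Qc (s q : ℍ[ℝ]) : ℍ[ℝ] := s ^ 2 - 2 * (q.re : ℍ[ℝ]) * s + ((‖q‖ ^ 2 : ℝ) : ℍ[ℝ])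

/-- The left slice hyperholomorphic Cauchy kernel `S_L^{-1}(s,q) = (s − q̄) Q_{c,s}(q)⁻¹`. -/
def SL (s q : ℍ[ℝ]) : ℍ[ℝ] := (s - star q) * (Qc s q)⁻¹

/-- The right slice hyperholomorphic Cauchy kernel `S_R^{-1}(s,q) = Q_{c,s}(q)⁻¹ (s − q̄)`. -/
def SR (s q : ℍ[ℝ]) : ℍ[ℝ] := (Qc s q)⁻¹ * (s - star q)

/-- The left `F`-kernel `F_L(s,q) = −4 (s − q̄) Q_{c,s}(q)^{-2}`. -/
def FL (s q : ℍ[ℝ]) : ℍ[ℝ] := -4 * (s - star q) * ((Qc s q)⁻¹) ^ 2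

/-- The right `F`-kernel `F_R(s,q) = −4 Q_{c,s}(q)^{-2} (s − q̄)`. -/
def FR (s q : ℍ[ℝ]) : ℍ[ℝ] := -4 * ((Qc s q)⁻¹) ^ 2 * (s - star q)

/-- The Clifford–Appell polynomials
`Q_ℓ(q,q̄) = (2/((ℓ+1)(ℓ+2))) Σ_{j=0}^{ℓ} (ℓ−j+1) q^{ℓ−j} q̄^j`. -/
def QA (ℓ : ℕ) (q : ℍ[ℝ]) : ℍ[ℝ] :=
  ((2 : ℝ) / ((ℓ + 1) * (ℓ + 2))) •
    ∑ j ∈ Finset.range (ℓ + 1), ((ℓ - j + 1 : ℕ) : ℍ[ℝ]) * q ^ (ℓ - j) * (star q) ^ j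


set_option maxHeartbeats 1000000
set_option synthInstance.maxHeartbeats 1000000

open Quaternion in
private lemma alg_key (u B s : ℍ[ℝ]) (c : ℝ) (hBs : B * s = s * B) :
    u * -(B * (((2*c : ℝ) : ℍ[ℝ]) - 2*s) * B) + (0-1) * B =
    -B + (c/2) • (-4*u*B^2) - (1/2:ℝ) • (-4*u*B^2*s) := by
  have h2 : (2:ℍ[ℝ]) = ((2:ℝ):ℍ[ℝ]) := by norm_cast
  have h4 : (-4:ℍ[ℝ]) = ((-4:ℝ):ℍ[ℝ]) := by norm_cast
  have hBs' : ∀ x : ℍ[ℝ], B * (s * x) = s * (B * x) := fun x => by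
    rw [← mul_assoc, hBs, mul_assoc]
  simp only [h2, h4, Quaternion.coe_mul_eq_smul, Quaternion.mul_coe_eq_smul, sq,
    smul_mul_assoc, mul_smul_comm, smul_smul, mul_sub, sub_mul, mul_add, add_mul,
    mul_neg, neg_mul, mul_assoc, hBs, hBs', zero_mul, zero_sub, neg_smul, one_mul]
  module

open Quaternion in
private lemma norm_sq_quat (x : ℍ[ℝ]) : ‖x‖ ^ 2 = normSq x := by
  rw [sq, ← normSq_eq_norm_mul_self]

noncomputable def reC : ℍ[ℝ] →L[ℝ] ℝ :=
  ⟨QuaternionAlgebra.reₗ (-1 : ℝ) 0 (-1), Quaternion.continuous_re⟩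
noncomputable def Ccoe : ℍ[ℝ] →L[ℝ] ℍ[ℝ] := (algebraMapCLM ℝ ℍ[ℝ]).comp reC

private lemma Ccoe_apply (p : ℍ[ℝ]) : Ccoe p = ((p.re : ℝ) : ℍ[ℝ]) := rfl


open Quaternion in
private lemma Qc_ne_zero {s q : ℍ[ℝ]} (h : ¬ inSphereOf s q) : Qc s q ≠ 0 := by
  intro h0
  apply h
  rw [Qc] at h0
  rw [show (2:ℍ[ℝ]) = ((2:ℝ):ℍ[ℝ]) by norm_cast, ← Quaternion.coe_mul] at h0
  rw [Quaternion.ext_iff] at h0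
  obtain ⟨e0, e1, e2, e3⟩ := h0
  simp only [sq, Quaternion.re_add, Quaternion.re_sub, Quaternion.re_mul, Quaternion.imI_mul,
    Quaternion.imJ_mul, Quaternion.imK_mul, Quaternion.imI_add, Quaternion.imI_sub,
    Quaternion.imJ_add, Quaternion.imJ_sub, Quaternion.imK_add, Quaternion.imK_sub,
    Quaternion.re_coe, Quaternion.imI_coe, Quaternion.imJ_coe, Quaternion.imK_coe,
    Quaternion.re_zero, Quaternion.imI_zero, Quaternion.imJ_zero, Quaternion.imK_zero,
    mul_zero, zero_mul, add_zero, zero_add, sub_zero, mul_one, one_mul] at e0 e1 e2 e3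
  have hn : ‖q‖*‖q‖ = q.re^2 + q.imI^2 + q.imJ^2 + q.imK^2 := by
    rw [← normSq_eq_norm_mul_self, normSq_def']
  have hsim : ‖s.im‖^2 = s.imI^2 + s.imJ^2 + s.imK^2 := by
    rw [norm_sq_quat, normSq_def']; simp
  have hqim : ‖q.im‖^2 = q.imI^2 + q.imJ^2 + q.imK^2 := by
    rw [norm_sq_quat, normSq_def']; simp
  rw [hn] at e0
  have hre : s.re = q.re := by
    by_contra hne
    have hI : s.imI = 0 := by
      rcases mul_eq_zero.1 (show s.imI * (s.re - q.re) = 0 by nlinarith [e1]) with h | h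
      · exact h
      · exact absurd (by linarith : s.re = q.re) hne
    have hJ : s.imJ = 0 := by
      rcases mul_eq_zero.1 (show s.imJ * (s.re - q.re) = 0 by nlinarith [e2]) with h | h
      · exact h
      · exact absurd (by linarith : s.re = q.re) hne
    have hK : s.imK = 0 := by
      rcases mul_eq_zero.1 (show s.imK * (s.re - q.re) = 0 by nlinarith [e3]) with h | h
      · exact h
      · exact absurd (by linarith : s.re = q.re) hne
    rw [hI, hJ, hK] at e0
    have hle : (s.re - q.re)^2 ≤ 0 := by
      nlinarith [e0, sq_nonneg q.imI, sq_nonneg q.imJ, sq_nonneg q.imK]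
    have hge := sq_nonneg (s.re - q.re)
    have h00 : (s.re - q.re)^2 = 0 := le_antisymm hle hge
    exact hne (by nlinarith [h00])
  refine ⟨hre, ?_⟩
  rw [hre] at e0
  have hsq : ‖s.im‖^2 = ‖q.im‖^2 := by rw [hsim, hqim]; nlinarith [e0]
  have h1 := norm_nonneg s.im
  have h2 := norm_nonneg q.im
  nlinarith [hsq]

/-- for `s ∉ [q]`,
`∂_{q₀} S_L^{-1}(s,q) = −Q_{c,s}(q)⁻¹ + (q₀/2) F_L(s,q) − (1/2) F_L(s,q) s`. -/
theorem dq0_SL (s q : ℍ[ℝ]) (h : ¬ inSphereOf s q) :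
    fderiv ℝ (fun p => SL s p) q 1 =
      -(Qc s q)⁻¹ + (q.re / 2) • FL s q - (1 / 2 : ℝ) • (FL s q * s) := by
  have hQ : Qc s q ≠ 0 := Qc_ne_zero h
  have hC : HasFDerivAt (fun p : ℍ[ℝ] => ((p.re : ℝ) : ℍ[ℝ])) Ccoe q := Ccoe.hasFDerivAt
  have hstar : HasFDerivAt (fun p : ℍ[ℝ] => star p)
      ((2:ℍ[ℝ]) • Ccoe - ContinuousLinearMap.id ℝ ℍ[ℝ]) q := by
    have h2 := (hC.const_mul (2:ℍ[ℝ])).sub (hasFDerivAt_id q)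
    exact h2.congr_of_eventuallyEq (.of_forall fun p => by
      have := Quaternion.self_add_star p
      simp only [id, Pi.sub_apply]
      rw [eq_sub_iff_add_eq, add_comm, this])
  have hQc : HasFDerivAt (fun p : ℍ[ℝ] => Qc s p)
      (0 - ((2:ℍ[ℝ]) • Ccoe).smulRight s +
        (q • ((2:ℍ[ℝ]) • Ccoe - ContinuousLinearMap.id ℝ ℍ[ℝ]) +
          (ContinuousLinearMap.id ℝ ℍ[ℝ]).smulRight (star q))) q := by
    have hmul : HasFDerivAt (fun p : ℍ[ℝ] => p * star p)
        (q • ((2:ℍ[ℝ]) • Ccoe - ContinuousLinearMap.id ℝ ℍ[ℝ]) +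
          (ContinuousLinearMap.id ℝ ℍ[ℝ]).smulRight (star q)) q :=
      (hasFDerivAt_id q).mul' hstar
    have h3 := ((hasFDerivAt_const (s^2) q).sub ((hC.const_mul (2:ℍ[ℝ])).mul_const' s)).add hmul
    exact h3.congr_of_eventuallyEq (.of_forall fun p => by
      simp only [Qc]
      congr 1
      rw [sq (‖p‖), ← Quaternion.normSq_eq_norm_mul_self, ← Quaternion.self_mul_star])
  have hinv : HasFDerivAt (fun p : ℍ[ℝ] => (Qc s p)⁻¹) (ContinuousLinearMap.comp
      (-(ContinuousLinearMap.mulLeftRight ℝ ℍ[ℝ] (Qc s q)⁻¹ (Qc s q)⁻¹))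
      (0 - ((2:ℍ[ℝ]) • Ccoe).smulRight s +
        (q • ((2:ℍ[ℝ]) • Ccoe - ContinuousLinearMap.id ℝ ℍ[ℝ]) +
          (ContinuousLinearMap.id ℝ ℍ[ℝ]).smulRight (star q)))) q :=
    (hasFDerivAt_inv' (𝕜 := ℝ) hQ).comp q hQc
  have hsub : HasFDerivAt (fun p : ℍ[ℝ] => s - star p)
      (0 - ((2:ℍ[ℝ]) • Ccoe - ContinuousLinearMap.id ℝ ℍ[ℝ])) q :=
    (hasFDerivAt_const s q).sub hstar
  have hSL' := hsub.mul' hinv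
  have hSL : HasFDerivAt (fun p : ℍ[ℝ] => SL s p)
      ((s - star q) • (ContinuousLinearMap.comp
        (-(ContinuousLinearMap.mulLeftRight ℝ ℍ[ℝ] (Qc s q)⁻¹ (Qc s q)⁻¹))
        (0 - ((2:ℍ[ℝ]) • Ccoe).smulRight s +
          (q • ((2:ℍ[ℝ]) • Ccoe - ContinuousLinearMap.id ℝ ℍ[ℝ]) +
            (ContinuousLinearMap.id ℝ ℍ[ℝ]).smulRight (star q)))) +
        (0 - ((2:ℍ[ℝ]) • Ccoe - ContinuousLinearMap.id ℝ ℍ[ℝ])).smulRight (Qc s q)⁻¹) q := hSL'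
  rw [hSL.fderiv]
  simp only [ContinuousLinearMap.add_apply, ContinuousLinearMap.coe_smul', Pi.smul_apply,
    ContinuousLinearMap.coe_sub', Pi.sub_apply, ContinuousLinearMap.coe_comp', Function.comp_apply,
    ContinuousLinearMap.smulRight_apply, ContinuousLinearMap.coe_id', id_eq,
    ContinuousLinearMap.zero_apply, ContinuousLinearMap.neg_apply,
    ContinuousLinearMap.mulLeftRight_apply, Ccoe_apply, Quaternion.re_one, smul_eq_mul]
  have hcoe1 : ((1:ℝ):ℍ[ℝ]) = 1 := Quaternion.coe_one
  rw [hcoe1]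
  have hmid : (0:ℍ[ℝ]) - 2 * 1 * s + (q * (2 * 1 - 1) + 1 * star q)
      = ((2*q.re : ℝ) : ℍ[ℝ]) - 2*s := by
    rw [← Quaternion.self_add_star' q]
    noncomm_ring
  rw [hmid]
  have hcomm : (Qc s q)⁻¹ * s = s * (Qc s q)⁻¹ := by
    have hcoe : Commute s ((q.re:ℝ):ℍ[ℝ]) := (Quaternion.coe_commutes q.re s).symm
    have hcoe2 : Commute s ((‖q‖^2:ℝ):ℍ[ℝ]) := (Quaternion.coe_commutes _ s).symm
    have hc : Commute s (Qc s q) := by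
      rw [Qc]
      exact (((Commute.refl s).pow_right 2).sub_right
        (((Commute.ofNat_right s 2).mul_right hcoe).mul_right (Commute.refl s))).add_right hcoe2
    exact (hc.inv_right₀).symm
  have halg := alg_key (s - star q) ((Qc s q)⁻¹) s q.re hcomm
  rw [show (0:ℍ[ℝ]) - (2 * 1 - 1) = 0 - 1 by norm_num]
  rw [FL] at *
  convert halg using 2
end
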